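/- Let m ≥ 1 and let Q be a quantum matrix of size m. The following are equivalent: (1) the rank of Q equals 1; (2) Q i k = Q i j · Q j k for all i < j < k in Fin m; (3) the point cone V_Q equals the set of all nonzero vectors u : Fin m → ℂ. -/

import Mathlib

/-- A quantum matrix of size `m`: all entries nonzero, diagonal entries `1`,
and `Q i j * Q j i = 1` for all `i, j`. -/
def IsQuantumMatrix {m : ℕ} (Q : Matrix (Fin m) (Fin m) ℂ) : Prop :=
  (∀ i j, Q i j ≠ 0) ∧ (∀ i, Q i i = 1) ∧ (∀ i j, Q i j * Q j i = 1)

/-- The point cone of a quantum matrix `Q`. -/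
def pointCone {m : ℕ} (Q : Matrix (Fin m) (Fin m) ℂ) : Set (Fin m → ℂ) :=
  {u | u ≠ 0 ∧ ∀ i j k : Fin m, i < j → j < k →
    (Q i j * Q j k - Q i k) * u i * u j * u k = 0}

theorem stmt_1 {m : ℕ} (hm : 1 ≤ m) (Q : Matrix (Fin m) (Fin m) ℂ)
    (hQ : IsQuantumMatrix Q) :
    (Q.rank = 1 ↔ ∀ i j k : Fin m, i < j → j < k → Q i k = Q i j * Q j k) ∧
    ((∀ i j k : Fin m, i < j → j < k → Q i k = Q i j * Q j k) ↔
      pointCone Q = {u : Fin m → ℂ | u ≠ 0}) := by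
  obtain ⟨hne, hdiag, hinv⟩ := hQ
  set z : Fin m := ⟨0, hm⟩ with hz
  constructor
  · constructor
    · -- rank = 1 → multiplicativity
      intro hrank i j k hij hjk
      rw [Matrix.rank_eq_finrank_span_cols] at hrank
      obtain ⟨v, hv0, hv⟩ := finrank_eq_one_iff'.mp hrank
      have hcol : ∀ l : Fin m, ∃ c : ℂ, ∀ i, Q i l = c * (v : Fin m → ℂ) i := by
        intro l
        have hmem : Q.transpose l ∈ Submodule.span ℂ (Set.range Q.transpose) :=
          Submodule.subset_span (Set.mem_range_self l)
        obtain ⟨c, hc⟩ := hv ⟨Q.transpose l, hmem⟩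
        refine ⟨c, fun i => ?_⟩
        have hc' : c • (v : Fin m → ℂ) = Q.transpose l := by
          have := congrArg Subtype.val hc; simpa using this
        have := congrFun hc' i
        simpa [Matrix.transpose_apply] using this.symm
      obtain ⟨cj, hcj⟩ := hcol j
      obtain ⟨ck, hck⟩ := hcol k
      have h1 : Q i k * Q j j = Q i j * Q j k := by
        rw [hcj, hck, hcj, hck]; ring
      rw [hdiag j, mul_one] at h1
      exact h1
    · -- multiplicativity → rank = 1
      intro h
      -- general multiplicativity through z
      have hgen : ∀ i k : Fin m, Q i k = Q i z * Q z k := by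
        intro i k
        rcases eq_or_lt_of_le (show z ≤ i by simp [hz, Fin.le_def]) with hi | hi
        · rw [← hi, hdiag, one_mul]
        rcases eq_or_lt_of_le (show z ≤ k by simp [hz, Fin.le_def]) with hk | hk
        · rw [← hk, hdiag, mul_one]
        have hi' : z < i := hi
        have hk' : z < k := hk
        rcases lt_trichotomy i k with hik | hik | hik
        · have := h z i k hi' hik
          rw [this, ← mul_assoc, mul_comm (Q i z) (Q z i), hinv, one_mul]
        · rw [hik, hdiag, mul_comm, hinv]
        · have hz' := h z k i hk' hik
          apply mul_right_cancel₀ (mul_ne_zero (hne k i) (hne z i))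
          calc Q i k * (Q k i * Q z i)
              = (Q i k * Q k i) * Q z i := by ring
            _ = Q z i := by rw [hinv, one_mul]
            _ = Q z k * Q k i := hz'
            _ = Q i z * Q z k * (Q k i * Q z i) := by
                rw [show Q i z * Q z k * (Q k i * Q z i)
                    = (Q i z * Q z i) * (Q z k * Q k i) by ring, hinv, one_mul]
      -- columns are multiples of column z
      rw [Matrix.rank_eq_finrank_span_cols]
      have hspan : Submodule.span ℂ (Set.range Q.transpose)
          = Submodule.span ℂ {Q.transpose z} := by
        apply le_antisymm
        · rw [Submodule.span_le]
          rintro _ ⟨k, rfl⟩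
          have : Q.transpose k = Q z k • Q.transpose z := by
            funext i
            simp only [Matrix.transpose_apply, Pi.smul_apply, smul_eq_mul]
            rw [hgen i k]; ring
          rw [this]
          exact Submodule.smul_mem _ _ (Submodule.mem_span_singleton_self _)
        · exact Submodule.span_mono (by rintro _ rfl; exact Set.mem_range_self z)
      rw [show Set.range Q.col = Set.range Q.transpose from rfl, hspan]
      apply finrank_span_singleton
      intro hcontra
      have := congrFun hcontra z
      simp only [Matrix.transpose_apply, Pi.zero_apply, hdiag] at this
      exact one_ne_zero this
  · constructor
    · intro h
      ext u
      simp only [pointCone, Set.mem_setOf_eq, and_iff_left_iff_imp]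
      intro _ i j k hij hjk
      rw [← h i j k hij hjk, sub_self, zero_mul, zero_mul, zero_mul]
    · intro h i j k hij hjk
      have h1 : (fun _ : Fin m => (1 : ℂ)) ∈ pointCone Q := by
        rw [h]
        intro hcontra
        have := congrFun hcontra z
        simp at this
      obtain ⟨-, h2⟩ := h1
      have := h2 i j k hij hjk
      simp only [mul_one] at this
      exact (sub_eq_zero.mp this).symm
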